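/- The reachability probability v(x) = P_x(τ_A < ∞) is the least non-negative solution of the fixpoint equation f(x) = 1_A(x) + 1_{A^c}(x)·∫_E f(y) P(x,dy): for any measurable f ≥ 0 satisfying this equation, v(x) ≤ f(x) for all x ∈ E. -/

import Mathlib

open MeasureTheory ProbabilityTheory Filter

noncomputable section

/-- Trajectory of the Markov process with update map `F` driven by the noise sequence `ξ`,
started at `x`. -/
def traj {E Ξ Ω : Type*} (F : E → Ξ → E) (ξ : ℕ → Ω → Ξ) (x : E) (ω : Ω) : ℕ → E
  | 0 => x
  | n + 1 => F (traj F ξ x ω n) (ξ n ω)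

namespace Stmt4Aux

variable {E Ξ Ω : Type*}

def seqTraj (F : E → Ξ → E) (x : E) (u : ℕ → Ξ) : ℕ → E
  | 0 => x
  | n + 1 => F (seqTraj F x u n) (u n)

lemma traj_eq_seqTraj (F : E → Ξ → E) (ξ : ℕ → Ω → Ξ) (x : E) (ω : Ω) :
    ∀ n, traj F ξ x ω n = seqTraj F x (fun k => ξ k ω) n
  | 0 => rfl
  | n + 1 => by rw [traj, seqTraj, traj_eq_seqTraj F ξ x ω n]

lemma seqTraj_shift (F : E → Ξ → E) (x : E) (u : ℕ → Ξ) :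
    ∀ k, seqTraj F x u (k + 1) = seqTraj F (F x (u 0)) (fun j => u (j + 1)) k
  | 0 => rfl
  | k + 1 => by
      rw [show seqTraj F x u (k + 1 + 1) = F (seqTraj F x u (k + 1)) (u (k + 1)) from rfl,
        seqTraj_shift F x u k]
      rfl

lemma seqTraj_congr (F : E → Ξ → E) (x : E) {u u' : ℕ → Ξ} :
    ∀ k, (∀ j, j < k → u j = u' j) → seqTraj F x u k = seqTraj F x u' k
  | 0, _ => rfl
  | k + 1, h => by
      rw [seqTraj, seqTraj, seqTraj_congr F x k (fun j hj => h j (hj.trans (Nat.lt_succ_self k))),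
        h k (Nat.lt_succ_self k)]

lemma measurable_seqTraj [MeasurableSpace E] [MeasurableSpace Ξ] {F : E → Ξ → E}
    (hF : Measurable (Function.uncurry F)) (k : ℕ) :
    Measurable (fun p : E × (ℕ → Ξ) => seqTraj F p.1 p.2 k) := by
  induction k with
  | zero => exact measurable_fst
  | succ k ih =>
      exact hF.comp (ih.prodMk ((measurable_pi_apply k).comp measurable_snd))

def extFin [Inhabited Ξ] (n : ℕ) (u : Fin n → Ξ) : ℕ → Ξ :=
  fun j => if h : j < n then u ⟨j, h⟩ else default

lemma measurable_extFin [MeasurableSpace Ξ] [Inhabited Ξ] (n : ℕ) :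
    Measurable (extFin (Ξ := Ξ) n) := by
  apply measurable_pi_lambda
  intro j
  by_cases h : j < n
  · simp only [extFin, dif_pos h]; exact measurable_pi_apply _
  · simp only [extFin, dif_neg h]; exact measurable_const

set_option linter.unusedSectionVars false

section Indep

open Set

variable [MeasurableSpace Ξ] [MeasurableSpace Ω]
  {μ : Measure Ω} [IsProbabilityMeasure μ] {ξ : ℕ → Ω → Ξ}


variable {Ξ Ω : Type*} [MeasurableSpace Ξ] [MeasurableSpace Ω]
  {μ : Measure Ω} [IsProbabilityMeasure μ] {ξ : ℕ → Ω → Ξ}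

lemma map_tuple_eq_pi (hξmeas : ∀ n, Measurable (ξ n))
    (hξindep : iIndepFun ξ μ)
    (hξid : ∀ n, IdentDistrib (ξ n) (ξ 0) μ μ)
    {n : ℕ} (g : Fin n → ℕ) (hg : Function.Injective g) :
    μ.map (fun ω (i : Fin n) => ξ (g i) ω) = Measure.pi (fun _ => μ.map (ξ 0)) := by
  haveI : IsProbabilityMeasure (μ.map (ξ 0)) := Measure.isProbabilityMeasure_map (hξmeas 0).aemeasurable
  refine (Measure.pi_eq fun s hs => ?_).symm
  have hY : Measurable (fun ω (i : Fin n) => ξ (g i) ω) :=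
    measurable_pi_lambda _ fun i => hξmeas (g i)
  rw [Measure.map_apply hY (MeasurableSet.univ_pi hs)]
  set sets : ℕ → Set Ξ := fun m => ⋂ i, ⋂ (_ : g i = m), s i with hsets_def
  have hsets_meas : ∀ m, MeasurableSet (sets m) := fun m =>
    MeasurableSet.iInter fun i => MeasurableSet.iInter fun _ => hs i
  have hsets_g : ∀ i, sets (g i) = s i := by
    intro i
    ext a
    simp only [hsets_def, mem_iInter]
    constructor
    · intro h; exact h i rfl
    · intro h j hj
      have := hg hj; subst this; exact h
  have hpre : (fun ω (i : Fin n) => ξ (g i) ω) ⁻¹' Set.univ.pi s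
      = ⋂ m ∈ Finset.image g Finset.univ, ξ m ⁻¹' sets m := by
    ext ω
    simp only [mem_preimage, Set.mem_pi, Set.mem_univ, forall_true_left, mem_iInter,
      Finset.mem_image, Finset.mem_univ, true_and, forall_exists_index]
    constructor
    · rintro h m i rfl
      rw [hsets_g i]; exact h i
    · intro h i
      have := h (g i) i rfl
      rwa [hsets_g i] at this
  rw [hpre, hξindep.measure_inter_preimage_eq_mul (Finset.image g Finset.univ)
    (fun m _ => hsets_meas m),
    Finset.prod_image (fun i _ j _ h => hg h)]
  refine Finset.prod_congr rfl fun i _ => ?_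
  rw [hsets_g i, ← Measure.map_apply (hξmeas (g i)) (hs i), (hξid (g i)).map_eq]

lemma indep_head_tail (hξmeas : ∀ n, Measurable (ξ n))
    (hξindep : iIndepFun ξ μ) (n : ℕ) :
    IndepFun (ξ 0) (fun ω (i : Fin n) => ξ ((i : ℕ) + 1) ω) μ := by
  classical
  set T : Finset ℕ := (Finset.range n).image Nat.succ with hT
  have hd : Disjoint ({0} : Finset ℕ) T := by
    simp [hT, Finset.disjoint_left]
  have base := hξindep.indepFun_finset {0} T hd hξmeas
  have hmem : ∀ i : Fin n, (i : ℕ) + 1 ∈ T := by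
    intro i; simp [hT]
  have h0 : (0 : ℕ) ∈ ({0} : Finset ℕ) := by simp
  have := base.comp (φ := fun h : {x // x ∈ ({0} : Finset ℕ)} → Ξ => h ⟨0, h0⟩)
    (ψ := fun h : {x // x ∈ T} → Ξ => fun i : Fin n => h ⟨(i : ℕ) + 1, hmem i⟩)
    (_mγ := inferInstance) (_mγ' := inferInstance)
    (measurable_pi_apply _) (measurable_pi_lambda _ fun i => measurable_pi_apply _)
  exact this


end Indep

end Stmt4Aux

open Stmt4Aux in
/-- the reachability probability `v x = P_x(τ_A < ∞)` is the least non-negative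
solution of the Bellman fixpoint equation. -/
theorem stmt_4
    {E Ξ Ω : Type*} [MeasurableSpace E] [StandardBorelSpace E]
    [MeasurableSpace Ξ] [MeasurableSpace Ω]
    (μ : Measure Ω) [IsProbabilityMeasure μ]
    (ξ : ℕ → Ω → Ξ) (hξmeas : ∀ n, Measurable (ξ n))
    (hξindep : iIndepFun ξ μ)
    (hξid : ∀ n, IdentDistrib (ξ n) (ξ 0) μ μ)
    (F : E → Ξ → E) (hF : Measurable (Function.uncurry F))
    (P : Kernel E E) [IsMarkovKernel P]
    (hP : ∀ x, P x = μ.map (fun ω => F x (ξ 0 ω)))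
    (A : Set E) (hA : MeasurableSet A)
    (v : E → ℝ)
    (hv : ∀ x, v x = (μ {ω | ∃ k, traj F ξ x ω k ∈ A}).toReal)
    -- a bounded measurable non-negative solution of the fixpoint equation
    (f : E → ℝ) (hfm : Measurable f) (hf0 : ∀ x, 0 ≤ f x)
    (hfb : ∃ C, ∀ x, |f x| ≤ C)
    (hffix : ∀ x, f x = A.indicator 1 x + Aᶜ.indicator 1 x * ∫ y, f y ∂(P x)) :
    ∀ x, v x ≤ f x := by
  classical
  -- basic nonemptiness
  have hΩne : Nonempty Ω := by
    by_contra h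
    rw [not_nonempty_iff] at h
    have h1 : μ Set.univ = 1 := measure_univ
    rw [Set.univ_eq_empty_iff.mpr h] at h1
    simp at h1
  haveI : Inhabited Ξ := ⟨ξ 0 hΩne.some⟩
  -- consequences of the fixpoint equation
  have hfA : ∀ x ∈ A, f x = 1 := by
    intro x hx
    rw [hffix x, Set.indicator_of_mem hx, Set.indicator_of_notMem (by simpa using hx)]
    simp
  have hffix' : ∀ x ∉ A, f x = ∫ ω, f (F x (ξ 0 ω)) ∂μ := by
    intro x hx
    rw [hffix x, Set.indicator_of_notMem hx, Set.indicator_of_mem (by simpa using hx)]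
    have hFx : Measurable (fun a : Ξ => F x a) := hF.comp measurable_prodMk_left
    rw [hP x]
    simp only [zero_add, Pi.one_apply, one_mul]
    exact integral_map (hFx.comp (hξmeas 0)).aemeasurable hfm.aestronglyMeasurable
  obtain ⟨C, hC⟩ := hfb
  -- the key induction: the probability of hitting `A` in fewer than `n` steps is at most `f x`
  have key : ∀ n x, μ {ω | ∃ k < n, seqTraj F x (fun j => ξ j ω) k ∈ A}
      ≤ ENNReal.ofReal (f x) := by
    intro n
    induction n with
    | zero =>
        intro x
        have h0 : {ω : Ω | ∃ k < 0, seqTraj F x (fun j => ξ j ω) k ∈ A} = ∅ := by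
          ext ω; simp
        rw [h0]; simp
    | succ n ih =>
        intro x
        by_cases hx : x ∈ A
        · calc μ {ω : Ω | ∃ k < n + 1, seqTraj F x (fun j => ξ j ω) k ∈ A} ≤ 1 := prob_le_one
            _ = ENNReal.ofReal (f x) := by rw [hfA x hx]; simp
        · have hFx : Measurable (fun a : Ξ => F x a) := hF.comp measurable_prodMk_left
          set X : Ω → Ξ := ξ 0 with hX
          set Y : Ω → (Fin n → Ξ) := fun ω i => ξ ((i : ℕ) + 1) ω with hY
          have hYm : Measurable Y := measurable_pi_lambda _ fun i => hξmeas _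
          set S : Set (Ξ × (Fin n → Ξ)) :=
            {p | ∃ k < n, seqTraj F (F x p.1) (extFin n p.2) k ∈ A} with hSdef
          have hS : MeasurableSet S := by
            have hrw : S = ⋃ k ∈ Finset.range n,
                (fun p : Ξ × (Fin n → Ξ) => seqTraj F (F x p.1) (extFin n p.2) k) ⁻¹' A := by
              ext p; simp [hSdef]
            rw [hrw]
            refine Set.Finite.measurableSet_biUnion (Finset.range n).finite_toSet fun k _ => ?_
            exact ((measurable_seqTraj hF k).comp
              ((hFx.comp measurable_fst).prodMk ((measurable_extFin n).comp measurable_snd))) hA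
          have hset : {ω : Ω | ∃ k < n + 1, seqTraj F x (fun j => ξ j ω) k ∈ A}
              = (fun ω => (X ω, Y ω)) ⁻¹' S := by
            ext ω
            simp only [Set.mem_setOf_eq, Set.mem_preimage, hSdef]
            constructor
            · rintro ⟨k, hk, hmem⟩
              match k, hk, hmem with
              | 0, hk, hmem => exact absurd hmem hx
              | k + 1, hk, hmem =>
                refine ⟨k, Nat.succ_lt_succ_iff.mp hk, ?_⟩
                rw [seqTraj_shift] at hmem
                have hcongr : seqTraj F (F x (ξ 0 ω)) (fun j => ξ (j + 1) ω) k
                    = seqTraj F (F x (ξ 0 ω)) (extFin n (Y ω)) k := by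
                  refine seqTraj_congr F _ k fun j hj => ?_
                  have hjn : j < n := hj.trans (Nat.succ_lt_succ_iff.mp hk)
                  simp [extFin, hjn, hY]
                rw [hcongr] at hmem
                exact hmem
            · rintro ⟨k, hk, hmem⟩
              refine ⟨k + 1, Nat.succ_lt_succ hk, ?_⟩
              rw [seqTraj_shift]
              have hcongr : seqTraj F (F x (ξ 0 ω)) (fun j => ξ (j + 1) ω) k
                  = seqTraj F (F x (ξ 0 ω)) (extFin n (Y ω)) k := by
                refine seqTraj_congr F _ k fun j hj => ?_
                have hjn : j < n := hj.trans hk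
                simp [extFin, hjn, hY]
              rw [hcongr]
              exact hmem
          have hXY : IndepFun X Y μ := indep_head_tail hξmeas hξindep n
          have hprodlaw := (ProbabilityTheory.indepFun_iff_map_prod_eq_prod_map_map
            (hξmeas 0).aemeasurable hYm.aemeasurable).mp hXY
          have hmapY : μ.map Y = μ.map (fun ω (i : Fin n) => ξ (i : ℕ) ω) := by
            rw [show Y = fun ω (i : Fin n) => ξ ((i : ℕ) + 1) ω from rfl]
            rw [map_tuple_eq_pi hξmeas hξindep hξid (fun i : Fin n => (i : ℕ) + 1)
              (fun a b h => Fin.ext (Nat.succ_injective h)),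
              map_tuple_eq_pi hξmeas hξindep hξid (fun i : Fin n => (i : ℕ)) Fin.val_injective]
          have hpt : ∀ a : Ξ, (μ.map Y) (Prod.mk a ⁻¹' S)
              = μ {ω | ∃ k < n, seqTraj F (F x a) (fun j => ξ j ω) k ∈ A} := by
            intro a
            rw [hmapY, Measure.map_apply (measurable_pi_lambda _ fun i => hξmeas _)
              (measurable_prodMk_left hS)]
            congr 1
            ext ω
            simp only [Set.mem_preimage, hSdef, Set.mem_setOf_eq]
            constructor
            · rintro ⟨k, hk, hmem⟩
              refine ⟨k, hk, ?_⟩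
              have hcongr : seqTraj F (F x a) (extFin n (fun i : Fin n => ξ (i : ℕ) ω)) k
                  = seqTraj F (F x a) (fun j => ξ j ω) k := by
                refine seqTraj_congr F _ k fun j hj => ?_
                have hjn : j < n := hj.trans_le hk.le
                simp [extFin, hjn]
              rwa [hcongr] at hmem
            · rintro ⟨k, hk, hmem⟩
              refine ⟨k, hk, ?_⟩
              have hcongr : seqTraj F (F x a) (extFin n (fun i : Fin n => ξ (i : ℕ) ω)) k
                  = seqTraj F (F x a) (fun j => ξ j ω) k := by
                refine seqTraj_congr F _ k fun j hj => ?_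
                have hjn : j < n := hj.trans_le hk.le
                simp [extFin, hjn]
              rwa [hcongr]
          have hint : Integrable (fun ω => f (F x (X ω))) μ := by
            refine Integrable.mono' (integrable_const C)
              ((hfm.comp (hFx.comp (hξmeas 0))).aestronglyMeasurable)
              (ae_of_all _ fun ω => ?_)
            simpa [Real.norm_eq_abs] using hC (F x (X ω))
          calc μ {ω : Ω | ∃ k < n + 1, seqTraj F x (fun j => ξ j ω) k ∈ A}
              = μ.map (fun ω => (X ω, Y ω)) S := by
                rw [hset, Measure.map_apply ((hξmeas 0).prodMk hYm) hS]
            _ = ((μ.map X).prod (μ.map Y)) S := by rw [hprodlaw]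
            _ = ∫⁻ a, (μ.map Y) (Prod.mk a ⁻¹' S) ∂(μ.map X) := Measure.prod_apply hS
            _ = ∫⁻ ω, (μ.map Y) (Prod.mk (X ω) ⁻¹' S) ∂μ :=
                lintegral_map (measurable_measure_prodMk_left hS) (hξmeas 0)
            _ ≤ ∫⁻ ω, ENNReal.ofReal (f (F x (X ω))) ∂μ := by
                refine lintegral_mono fun ω => ?_
                rw [hpt (X ω)]
                exact ih (F x (X ω))
            _ = ENNReal.ofReal (∫ ω, f (F x (X ω)) ∂μ) :=
                (ofReal_integral_eq_lintegral_ofReal hint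
                  (ae_of_all _ fun ω => hf0 (F x (X ω)))).symm
            _ = ENNReal.ofReal (f x) := by rw [← hffix' x hx]
  -- conclusion by monotone convergence
  intro x
  rw [hv x]
  have hU : {ω | ∃ k, traj F ξ x ω k ∈ A}
      = ⋃ n, {ω : Ω | ∃ k < n, seqTraj F x (fun j => ξ j ω) k ∈ A} := by
    ext ω
    simp only [Set.mem_setOf_eq, Set.mem_iUnion, traj_eq_seqTraj]
    exact ⟨fun ⟨k, h⟩ => ⟨k + 1, k, Nat.lt_succ_self k, h⟩, fun ⟨n, k, _, h⟩ => ⟨k, h⟩⟩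
  have hmono : Monotone fun n => {ω : Ω | ∃ k < n, seqTraj F x (fun j => ξ j ω) k ∈ A} := by
    rintro m n hmn ω ⟨k, hk, h⟩
    exact ⟨k, hk.trans_le hmn, h⟩
  rw [hU, hmono.directed_le.measure_iUnion]
  exact ENNReal.toReal_le_of_le_ofReal (hf0 x) (iSup_le fun n => key n x)
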